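/- Let A and B be finite sets, C a set, and T = (Q, δ) a Turing automaton of sort (A ⊕ B) ⊕ (A ⊕ B) ⊕ C. Let ρ be the bijection from (A ⊕ B) ⊕ (A ⊕ B) ⊕ C to (A ⊕ A) ⊕ (B ⊕ B) ⊕ C that keeps the first A, interchanges the first B with the second A, keeps the second B, and fixes C (i.e., the permutation 1_A ⊗ c_{B,A} ⊗ 1_{B⊕C}). Then κ_{A⊕B} T = κ_B(κ_A(T · ρ)) as Turing automata of sort C: both have state set Q and their transition relations coincide. (Vanishing, axiom I7, for Turing automata.) -/

import Mathlib

/-- The transition relation of a Turing automaton of sort `X`: a relation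
`δ ⊆ (Q × X_*)²`, where `X_* = X ⊕ {*}` is modeled as `Option X`, with `none` the anchor. -/
def TRel (Q X : Type*) : Type _ := (Q × Option X) → (Q × Option X) → Prop

/-- Relational composition (product of the semiring of binary relations on `Q`). -/
def rcomp {Q : Type*} (r s : Q → Q → Prop) : Q → Q → Prop := fun a c => ∃ b, r a b ∧ s b c

/-- Union of relations (sum of the semiring of binary relations on `Q`). -/
def runion {Q : Type*} (r s : Q → Q → Prop) : Q → Q → Prop := fun a b => r a b ∨ s a b

/-- 2×2 matrices of binary relations on `Q`. -/
def Mat2 (Q : Type*) : Type _ := Fin 2 → Fin 2 → (Q → Q → Prop)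

/-- The transposition of indices used to interchange the two rows of a matrix. -/
def swap2 : Fin 2 → Fin 2 := fun i => if i = 0 then 1 else 0

/-- Alternating matrix product `M ⊙ N := M · (σN)`, where `σN` interchanges the rows of `N`. -/
def altMul {Q : Type*} (M N : Mat2 Q) : Mat2 Q :=
  fun i j => runion (rcomp (M i 0) (N (swap2 0) j)) (rcomp (M i 1) (N (swap2 1) j))

/-- `U⁰ := σI₂`: identity relations off the diagonal, empty relations on the diagonal. -/
def altOne {Q : Type*} : Mat2 Q := fun i j => if i = j then (fun _ _ => False) else Eq

/-- Alternating matrix powers: `U⁰ = σI₂`, `U^(n+1) = Uⁿ ⊙ U`. -/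
def altPow {Q : Type*} (U : Mat2 Q) : ℕ → Mat2 Q
  | 0 => altOne
  | n + 1 => altMul (altPow U n) U

/-- Alternating product of a row vector with a matrix: `u ⊙ M := u · (σM)`. -/
def altRowMul {Q : Type*} (u : Fin 2 → Q → Q → Prop) (M : Mat2 Q) : Fin 2 → Q → Q → Prop :=
  fun j => runion (rcomp (u 0) (M (swap2 0) j)) (rcomp (u 1) (M (swap2 1) j))

/-- Alternating product of a row vector with a column vector: `u ⊙ v := u · (σv)`. -/
def altRowCol {Q : Type*} (u v : Fin 2 → Q → Q → Prop) : Q → Q → Prop :=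
  runion (rcomp (u 0) (v (swap2 0))) (rcomp (u 1) (v (swap2 1)))

/-- A family `λ_{x,y}` of binary relations on `Q` indexed by pairs of interfaces. -/
def LamFamily (Q X : Type*) : Type _ := Option X → Option X → (Q → Q → Prop)

/-- The base case of the Kleene elimination: `λ^∅_{x,y} = {(q,r) | ((q,x),(r,y)) ∈ δ}`. -/
def lamInit {Q A B : Type*} (δ : TRel Q (A ⊕ A ⊕ B)) : LamFamily Q (A ⊕ A ⊕ B) :=
  fun x y q r => δ (q, x) (r, y)

/-- One Kleene elimination step at `z ∈ A`:
`λ^(C∪{z})_{x,y} := λ^C_{x,y} ∪ ⋃_{n≥0} u ⊙ Uⁿ ⊙ v` with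
`u = (λ^C_{x,⟨z,1⟩}, λ^C_{x,⟨z,2⟩})`, `v = (λ^C_{⟨z,1⟩,y}; λ^C_{⟨z,2⟩,y})` and
`U = (λ^C_{⟨z,i⟩,⟨z,j⟩})_{i,j}`. -/
def elimStep {Q A B : Type*} (lam : LamFamily Q (A ⊕ A ⊕ B)) (z : A) :
    LamFamily Q (A ⊕ A ⊕ B) :=
  fun x y =>
    let p : Fin 2 → Option (A ⊕ A ⊕ B) := ![some (Sum.inl z), some (Sum.inr (Sum.inl z))]
    let u : Fin 2 → Q → Q → Prop := fun i => lam x (p i)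
    let U : Mat2 Q := fun i j => lam (p i) (p j)
    let v : Fin 2 → Q → Q → Prop := fun i => lam (p i) y
    runion (lam x y) (fun q r => ∃ n, altRowCol (altRowMul u (altPow U n)) v q r)

/-- Kleene elimination along a list of elements of `A`. -/
def lamList {Q A B : Type*} (δ : TRel Q (A ⊕ A ⊕ B)) : List A → LamFamily Q (A ⊕ A ⊕ B)
  | [] => lamInit δ
  | z :: L => elimStep (lamList δ L) z

/-- The trace `κ_A T` of a Turing automaton of sort `A ⊕ A ⊕ B` (`A` finite): its
transitions are `((q,b),(r,b'))` iff `(q,r) ∈ λ^A_{b,b'}`. -/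
def kappa {Q A B : Type*} [Fintype A] (δ : TRel Q (A ⊕ A ⊕ B)) : TRel Q B :=
  fun a b =>
    lamList δ Finset.univ.toList (a.2.map (fun x => Sum.inr (Sum.inr x)))
      (b.2.map (fun x => Sum.inr (Sum.inr x))) a.1 b.1

/-- The relabeling `T · ρ` of a Turing automaton along a bijection `ρ : X ≃ Y`:
`((q, ρ_* x),(r, ρ_* y))` is a transition iff `((q,x),(r,y))` is, where `ρ_*(*) = *`. -/
def relabel {Q X Y : Type*} (ρ : X ≃ Y) (δ : TRel Q X) : TRel Q Y :=
  fun a b => δ (a.1, a.2.map ρ.symm) (b.1, b.2.map ρ.symm)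

/-- The sum `T ⊕ T'` of Turing automata of sorts `X` and `Y`: states `Q × Q'`, and a
transition happens in one component while the other state stays put; anchors identified. -/
def autSum {Q Q' X Y : Type*} (δ : TRel Q X) (δ' : TRel Q' Y) : TRel (Q × Q') (X ⊕ Y) :=
  fun a b =>
    (∃ u v : Option X, a.2 = u.map Sum.inl ∧ b.2 = v.map Sum.inl ∧
      a.1.2 = b.1.2 ∧ δ (a.1.1, u) (b.1.1, v)) ∨
    (∃ u v : Option Y, a.2 = u.map Sum.inr ∧ b.2 = v.map Sum.inr ∧
      a.1.1 = b.1.1 ∧ δ' (a.1.2, u) (b.1.2, v))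

/-- The identity Turing automaton `1_A` of sort `A ⊕ A`: a single state, with transitions
from `⟨a,1⟩` to `⟨a,2⟩` and back for every `a ∈ A`. -/
def idAut (A : Type*) : TRel PUnit (A ⊕ A) :=
  fun a b =>
    (∃ x : A, a.2 = some (Sum.inl x) ∧ b.2 = some (Sum.inr x)) ∨
    (∃ x : A, a.2 = some (Sum.inr x) ∧ b.2 = some (Sum.inl x))

/-- The permutation `c_{A,B⊕B} ⊗ 1_C` rearranging `(A ⊕ B) ⊕ (B ⊕ C)` into
`B ⊕ B ⊕ (A ⊕ C)`, used to define the derived composition. -/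
def compPerm (A B C : Type*) : (A ⊕ B) ⊕ (B ⊕ C) ≃ B ⊕ B ⊕ (A ⊕ C) where
  toFun x := match x with
    | .inl (.inl a) => .inr (.inr (.inl a))
    | .inl (.inr b) => .inl b
    | .inr (.inl b) => .inr (.inl b)
    | .inr (.inr c) => .inr (.inr (.inr c))
  invFun y := match y with
    | .inl b => .inl (.inr b)
    | .inr (.inl b) => .inr (.inl b)
    | .inr (.inr (.inl a)) => .inl (.inl a)
    | .inr (.inr (.inr c)) => .inr (.inr c)
  left_inv x := by rcases x with (a | b) | (b | c) <;> rfl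
  right_inv y := by rcases y with b | (b | (a | c)) <;> rfl

/-- The derived composition `T ∘ T' := κ_B((T ⊕ T') · (c_{A,B⊕B} ⊗ 1_C))` of Turing
automata of sorts `A ⊕ B` and `B ⊕ C` (`B` finite). -/
def compAut {Q Q' A B C : Type*} [Fintype B]
    (δ : TRel Q (A ⊕ B)) (δ' : TRel Q' (B ⊕ C)) : TRel (Q × Q') (A ⊕ C) :=
  kappa (relabel (compPerm A B C) (autSum δ δ'))

/-- The permutation `1_A ⊗ c_{B,A} ⊗ 1_{B⊕C}` rearranging `(A ⊕ B) ⊕ (A ⊕ B) ⊕ C` into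
`A ⊕ A ⊕ B ⊕ B ⊕ C`: it keeps the first `A`, interchanges the first `B` with the second
`A`, keeps the second `B`, and fixes `C`. -/
def vanishPerm (A B C : Type*) : (A ⊕ B) ⊕ (A ⊕ B) ⊕ C ≃ A ⊕ A ⊕ B ⊕ B ⊕ C where
  toFun x := match x with
    | .inl (.inl a) => .inl a
    | .inl (.inr b) => .inr (.inr (.inl b))
    | .inr (.inl (.inl a)) => .inr (.inl a)
    | .inr (.inl (.inr b)) => .inr (.inr (.inr (.inl b)))
    | .inr (.inr c) => .inr (.inr (.inr (.inr c)))
  invFun y := match y with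
    | .inl a => .inl (.inl a)
    | .inr (.inl a) => .inr (.inl (.inl a))
    | .inr (.inr (.inl b)) => .inl (.inr b)
    | .inr (.inr (.inr (.inl b))) => .inr (.inl (.inr b))
    | .inr (.inr (.inr (.inr c))) => .inr (.inr c)
  left_inv x := by rcases x with (a | b) | ((a | b) | c) <;> rfl
  right_inv y := by rcases y with a | (a | (b | (b | c))) <;> rfl

namespace Vanish

variable {Q A B : Type*}

def pf {A B : Type*} (z : A) : Fin 2 → Option (A ⊕ A ⊕ B) :=
  ![some (Sum.inl z), some (Sum.inr (Sum.inl z))]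

@[simp] lemma swap2_zero : swap2 0 = 1 := rfl
@[simp] lemma swap2_one : swap2 1 = 0 := rfl
@[simp] lemma swap2_swap2 (i : Fin 2) : swap2 (swap2 i) = i := by fin_cases i <;> rfl

lemma swap2_ne (i : Fin 2) : swap2 i ≠ i := by fin_cases i <;> simp

lemma eq_swap2_of_ne {c j : Fin 2} (h : c ≠ j) : c = swap2 j := by
  fin_cases c <;> fin_cases j <;> simp_all

/-- Paths through eliminated interfaces: the spec of Kleene elimination. -/
inductive Spec (lam0 : LamFamily Q (A ⊕ A ⊕ B)) (S : A → Prop) :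
    Option (A ⊕ A ⊕ B) → Option (A ⊕ A ⊕ B) → Q → Q → Prop
  | base {x y q r} : lam0 x y q r → Spec lam0 S x y q r
  | step {x y q r} (z : A) (i : Fin 2) (s : Q) : S z → lam0 x (pf z i) q s →
      Spec lam0 S (pf z (swap2 i)) y s r → Spec lam0 S x y q r

lemma spec_mono {lam0 : LamFamily Q (A ⊕ A ⊕ B)} {S S' : A → Prop}
    (hS : ∀ w, S w → S' w) {x y q r} (h : Spec lam0 S x y q r) :
    Spec lam0 S' x y q r := by
  induction h with
  | base h => exact Spec.base h
  | step z i s hz h1 _ ih => exact Spec.step z i s (hS z hz) h1 ih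

lemma spec_glue_aux {lam0 : LamFamily Q (A ⊕ A ⊕ B)} {S : A → Prop} {z : A} (hz : S z)
    {i : Fin 2} {x y m q s r} (h1 : Spec lam0 S x m q s) :
    m = pf z i → Spec lam0 S (pf z (swap2 i)) y s r → Spec lam0 S x y q r := by
  induction h1 with
  | base h => exact fun hm h2 => Spec.step z i _ hz (hm ▸ h) h2
  | step w j t hw hlam _ ih => exact fun hm h2 => Spec.step w j t hw hlam (ih hm h2)

lemma spec_glue {lam0 : LamFamily Q (A ⊕ A ⊕ B)} {S : A → Prop} {z : A} (hz : S z)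
    {i : Fin 2} {x y q s r} (h1 : Spec lam0 S x (pf z i) q s)
    (h2 : Spec lam0 S (pf z (swap2 i)) y s r) : Spec lam0 S x y q r :=
  spec_glue_aux hz h1 rfl h2

lemma spec_of_not {lam0 : LamFamily Q (A ⊕ A ⊕ B)} {S : A → Prop}
    (hS : ∀ w, ¬ S w) {x y q r} : Spec lam0 S x y q r ↔ lam0 x y q r := by
  constructor
  · intro h
    cases h with
    | base h => exact h
    | step z i s hz h1 h2 => exact absurd hz (hS z)
  · exact Spec.base

lemma altMul_iff (M N : Mat2 Q) (i j : Fin 2) (q r : Q) :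
    altMul M N i j q r ↔ ∃ a s, M i a q s ∧ N (swap2 a) j s r := by
  constructor
  · rintro (⟨s, h1, h2⟩ | ⟨s, h1, h2⟩)
    · exact ⟨0, s, h1, h2⟩
    · exact ⟨1, s, h1, h2⟩
  · rintro ⟨a, s, h1, h2⟩
    fin_cases a
    · exact Or.inl ⟨s, h1, h2⟩
    · exact Or.inr ⟨s, h1, h2⟩

lemma altOne_iff (i j : Fin 2) (q r : Q) :
    altOne i j q r ↔ i ≠ j ∧ q = r := by
  unfold altOne
  split
  · simp_all
  · simp_all [Eq.comm]

lemma altPow_succ_iff (U : Mat2 Q) (n : ℕ) (c j : Fin 2) (q r : Q) :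
    altPow U (n + 1) c j q r ↔ ∃ a s, U c a q s ∧ altPow U n (swap2 a) j s r := by
  induction n generalizing c j q r with
  | zero =>
    show altMul altOne U c j q r ↔ _
    rw [altMul_iff]
    constructor
    · rintro ⟨a, s, h1, h2⟩
      rw [altOne_iff] at h1
      obtain ⟨hne, rfl⟩ := h1
      have ha : a = swap2 c := eq_swap2_of_ne hne.symm
      subst ha
      rw [swap2_swap2] at h2
      exact ⟨j, r, h2, (altOne_iff _ _ _ _).2 ⟨swap2_ne j, rfl⟩⟩
    · rintro ⟨a, s, h1, h2⟩
      have h2' : swap2 a ≠ j ∧ s = r := (altOne_iff _ _ _ _).1 h2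
      obtain ⟨hne, rfl⟩ := h2'
      have ha : a = j := by
        have h3 := eq_swap2_of_ne hne
        calc a = swap2 (swap2 a) := (swap2_swap2 a).symm
        _ = j := by rw [h3, swap2_swap2]
      subst ha
      refine ⟨swap2 c, q, (altOne_iff _ _ _ _).2 ⟨(swap2_ne c).symm, rfl⟩, ?_⟩
      rw [swap2_swap2]
      exact h1
  | succ n ih =>
    constructor
    · intro h
      rw [show altPow U (n + 1 + 1) = altMul (altPow U (n + 1)) U from rfl, altMul_iff] at h
      obtain ⟨a, s, h1, h2⟩ := h
      obtain ⟨b, t, h3, h4⟩ := (ih c a q s).1 h1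
      refine ⟨b, t, h3, ?_⟩
      rw [show altPow U (n + 1) = altMul (altPow U n) U from rfl, altMul_iff]
      exact ⟨a, s, h4, h2⟩
    · rintro ⟨b, t, h1, h2⟩
      rw [show altPow U (n + 1) = altMul (altPow U n) U from rfl, altMul_iff] at h2
      obtain ⟨a, s, h3, h4⟩ := h2
      rw [show altPow U (n + 1 + 1) = altMul (altPow U (n + 1)) U from rfl, altMul_iff]
      exact ⟨a, s, (ih c a q s).2 ⟨b, t, h1, h3⟩, h4⟩

end Vanish
namespace Vanish

variable {Q A B : Type*}

lemma elimStep_def (lam : LamFamily Q (A ⊕ A ⊕ B)) (z : A) (x y : Option (A ⊕ A ⊕ B)) :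
    elimStep lam z x y = runion (lam x y)
      (fun q r => ∃ n, altRowCol
        (altRowMul (fun i => lam x (pf z i))
          (altPow (fun i j => lam (pf z i) (pf z j)) n))
        (fun i => lam (pf z i) y) q r) := rfl

lemma altRowCol_rowMul (u : Fin 2 → Q → Q → Prop) (M : Mat2 Q) (v : Fin 2 → Q → Q → Prop)
    (q r : Q) :
    altRowCol (altRowMul u M) v q r ↔
      ∃ a j s t, u a q s ∧ M (swap2 a) j s t ∧ v (swap2 j) t r := by
  constructor
  · rintro (⟨t, (⟨s, h1, h2⟩ | ⟨s, h1, h2⟩), h3⟩ | ⟨t, (⟨s, h1, h2⟩ | ⟨s, h1, h2⟩), h3⟩)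
    · exact ⟨0, 0, s, t, h1, h2, h3⟩
    · exact ⟨1, 0, s, t, h1, h2, h3⟩
    · exact ⟨0, 1, s, t, h1, h2, h3⟩
    · exact ⟨1, 1, s, t, h1, h2, h3⟩
  · rintro ⟨a, j, s, t, h1, h2, h3⟩
    fin_cases a <;> fin_cases j
    · exact Or.inl ⟨t, Or.inl ⟨s, h1, h2⟩, h3⟩
    · exact Or.inr ⟨t, Or.inl ⟨s, h1, h2⟩, h3⟩
    · exact Or.inl ⟨t, Or.inr ⟨s, h1, h2⟩, h3⟩
    · exact Or.inr ⟨t, Or.inr ⟨s, h1, h2⟩, h3⟩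

lemma pow_glue {lam0 : LamFamily Q (A ⊕ A ⊕ B)} {S S' : A → Prop}
    (hS : ∀ w, S w → S' w) {z : A} (hz : S' z) {y : Option (A ⊕ A ⊕ B)} {r : Q} :
    ∀ (n : ℕ) (c j : Fin 2) (s t : Q),
      altPow (fun i j => Spec lam0 S (pf z i) (pf z j)) n c j s t →
      Spec lam0 S' (pf z (swap2 j)) y t r → Spec lam0 S' (pf z c) y s r := by
  intro n
  induction n with
  | zero =>
    intro c j s t h hv
    have h' : c ≠ j ∧ s = t := (altOne_iff _ _ _ _).1 h
    obtain ⟨hne, rfl⟩ := h'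
    rw [eq_swap2_of_ne hne]
    exact hv
  | succ n ih =>
    intro c j s t h hv
    rw [altPow_succ_iff (fun i j => Spec lam0 S (pf z i) (pf z j)) n c j s t] at h
    obtain ⟨a, s', h1, h2⟩ := h
    exact spec_glue hz (spec_mono hS h1) (ih (swap2 a) j s' t h2 hv)

lemma elimStep_spec (lam0 : LamFamily Q (A ⊕ A ⊕ B)) (S : A → Prop) (z : A)
    (x y : Option (A ⊕ A ⊕ B)) (q r : Q) :
    elimStep (Spec lam0 S) z x y q r ↔ Spec lam0 (fun w => S w ∨ w = z) x y q r := by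
  have hS : ∀ w, S w → (S w ∨ w = z) := fun w hw => Or.inl hw
  rw [elimStep_def (Spec lam0 S) z x y]
  constructor
  · rintro (h | ⟨n, h⟩)
    · exact spec_mono hS h
    · rw [altRowCol_rowMul] at h
      obtain ⟨a, j, s, t, hu, hU, hv⟩ := h
      refine spec_glue (z := z) (i := a) ?_ (spec_mono hS hu)
        (pow_glue hS (Or.inr rfl) n (swap2 a) j s t hU (spec_mono hS hv))
      exact Or.inr rfl
  · intro h
    induction h with
    | base h => exact Or.inl (Spec.base h)
    | step w i s hw hlam _ ih =>
      rcases hw with hw | rfl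
      · rcases ih with ih | ⟨n, ih⟩
        · exact Or.inl (Spec.step w i s hw hlam ih)
        · rw [altRowCol_rowMul] at ih
          obtain ⟨a, j, s', t, hu, hU, hv⟩ := ih
          refine Or.inr ⟨n, (altRowCol_rowMul _ _ _ _ _).2
            ⟨a, j, s', t, Spec.step w i s hw hlam hu, hU, hv⟩⟩
      · rcases ih with ih | ⟨n, ih⟩
        · refine Or.inr ⟨0, (altRowCol_rowMul _ _ _ _ _).2
            ⟨i, i, s, s, Spec.base hlam, ?_, ih⟩⟩
          exact (altOne_iff _ _ _ _).2 ⟨swap2_ne i, rfl⟩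
        · rw [altRowCol_rowMul] at ih
          obtain ⟨a, j, s', t, hu, hU, hv⟩ := ih
          refine Or.inr ⟨n + 1, (altRowCol_rowMul _ _ _ _ _).2
            ⟨i, j, s, t, Spec.base hlam, ?_, hv⟩⟩
          rw [altPow_succ_iff (fun i j => Spec lam0 S (pf w i) (pf w j)) n (swap2 i) j s t]
          exact ⟨a, s', hu, hU⟩

end Vanish
namespace Vanish

variable {Q A B : Type*}

/-- Kleene elimination along a list, starting from an arbitrary family. -/
def elimList (lam : LamFamily Q (A ⊕ A ⊕ B)) : List A → LamFamily Q (A ⊕ A ⊕ B)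
  | [] => lam
  | z :: L => elimStep (elimList lam L) z

lemma lamList_eq_elimList (δ : TRel Q (A ⊕ A ⊕ B)) :
    ∀ L : List A, lamList δ L = elimList (lamInit δ) L
  | [] => rfl
  | z :: L => by
    show elimStep (lamList δ L) z = elimStep (elimList (lamInit δ) L) z
    rw [lamList_eq_elimList δ L]

lemma elimList_append (lam : LamFamily Q (A ⊕ A ⊕ B)) :
    ∀ L1 L2 : List A, elimList lam (L1 ++ L2) = elimList (elimList lam L2) L1
  | [], L2 => rfl
  | z :: L1, L2 => by
    show elimStep (elimList lam (L1 ++ L2)) z = _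
    rw [elimList_append lam L1 L2]
    rfl

lemma spec_congr {lam0 : LamFamily Q (A ⊕ A ⊕ B)} {S S' : A → Prop}
    (h : ∀ w, S w ↔ S' w) {x y q r} :
    Spec lam0 S x y q r ↔ Spec lam0 S' x y q r :=
  ⟨spec_mono fun w => (h w).1, spec_mono fun w => (h w).2⟩

lemma elimList_spec (lam0 : LamFamily Q (A ⊕ A ⊕ B)) :
    ∀ (L : List A) (x y : Option (A ⊕ A ⊕ B)) (q r : Q),
      elimList lam0 L x y q r ↔ Spec lam0 (fun w => w ∈ L) x y q r
  | [], x, y, q, r => by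
    simp only [List.not_mem_nil]
    exact (spec_of_not (by simp)).symm
  | z :: L, x, y, q, r => by
    have hEq : elimList lam0 L = Spec lam0 (fun w => w ∈ L) := by
      funext x y q r
      exact propext (elimList_spec lam0 L x y q r)
    show elimStep (elimList lam0 L) z x y q r ↔ _
    rw [hEq, elimStep_spec]
    exact spec_congr (by intro w; simp [List.mem_cons, or_comm])

lemma elimList_mem_congr (lam0 : LamFamily Q (A ⊕ A ⊕ B)) {L L' : List A}
    (h : ∀ w, w ∈ L ↔ w ∈ L') (x y : Option (A ⊕ A ⊕ B)) (q r : Q) :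
    elimList lam0 L x y q r ↔ elimList lam0 L' x y q r := by
  rw [elimList_spec, elimList_spec]
  exact spec_congr h

lemma elimStep_map {A' B' : Type*} (g : A' ⊕ A' ⊕ B' → A ⊕ A ⊕ B) (h : A' → A)
    (hg1 : ∀ z, g (.inl z) = .inl (h z))
    (hg2 : ∀ z, g (.inr (.inl z)) = .inr (.inl (h z)))
    (lam : LamFamily Q (A ⊕ A ⊕ B)) (z : A') (x y : Option (A' ⊕ A' ⊕ B')) :
    elimStep (fun x y => lam (x.map g) (y.map g)) z x y
      = elimStep lam (h z) (x.map g) (y.map g) := by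
  have hp : ∀ i : Fin 2, Option.map g (pf z i) = pf (h z) i := by
    intro i
    fin_cases i <;> simp [pf, hg1, hg2]
  rw [elimStep_def lam (h z) (x.map g) (y.map g),
    elimStep_def (fun x y => lam (x.map g) (y.map g)) z x y]
  simp only [hp]

lemma elimList_map {A' B' : Type*} (g : A' ⊕ A' ⊕ B' → A ⊕ A ⊕ B) (h : A' → A)
    (hg1 : ∀ z, g (.inl z) = .inl (h z))
    (hg2 : ∀ z, g (.inr (.inl z)) = .inr (.inl (h z)))
    (lam : LamFamily Q (A ⊕ A ⊕ B)) :
    ∀ L : List A',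
      elimList (fun x y => lam (x.map g) (y.map g)) L
        = fun x y => elimList lam (L.map h) (x.map g) (y.map g)
  | [] => rfl
  | z :: L => by
    show elimStep (elimList (fun x y => lam (x.map g) (y.map g)) L) z = _
    rw [elimList_map g h hg1 hg2 lam L]
    funext x y
    exact elimStep_map g h hg1 hg2 (elimList lam (L.map h)) z x y

end Vanish

/-- Vanishing (axiom I7) for Turing automata: for a Turing automaton `T` of sort
`(A ⊕ B) ⊕ (A ⊕ B) ⊕ C`, `κ_{A⊕B} T = κ_B(κ_A(T · ρ))` with
`ρ = 1_A ⊗ c_{B,A} ⊗ 1_{B⊕C}`; both sides have state set `Q` and their transition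
relations coincide. -/
theorem vanishing {Q A B C : Type*} [Nonempty Q] [Fintype A] [Fintype B]
    (δ : TRel Q ((A ⊕ B) ⊕ (A ⊕ B) ⊕ C)) :
    kappa δ = kappa (kappa (relabel (vanishPerm A B C) δ)) := by
  classical
  have T1 : ∀ L : List A, lamList (relabel (vanishPerm A B C) δ) L
      = fun x y => Vanish.elimList (lamInit δ) (L.map Sum.inl)
          (x.map fun w => (vanishPerm A B C).symm w)
          (y.map fun w => (vanishPerm A B C).symm w) := by
    intro L
    rw [Vanish.lamList_eq_elimList]
    exact Vanish.elimList_map (fun w => (vanishPerm A B C).symm w) Sum.inl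
      (fun z => rfl) (fun z => rfl) (lamInit δ) L
  have T2 : ∀ L : List B, lamList (kappa (relabel (vanishPerm A B C) δ)) L
      = fun x y => Vanish.elimList
          (Vanish.elimList (lamInit δ) (((Finset.univ : Finset A).toList).map Sum.inl))
          (L.map Sum.inr)
          (x.map fun w => (vanishPerm A B C).symm (Sum.inr (Sum.inr w)))
          (y.map fun w => (vanishPerm A B C).symm (Sum.inr (Sum.inr w))) := by
    intro L
    rw [Vanish.lamList_eq_elimList]
    have hinit2 : lamInit (kappa (relabel (vanishPerm A B C) δ))
        = fun x y => (Vanish.elimList (lamInit δ) (((Finset.univ : Finset A).toList).map Sum.inl))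
            (x.map fun w => (vanishPerm A B C).symm (Sum.inr (Sum.inr w)))
            (y.map fun w => (vanishPerm A B C).symm (Sum.inr (Sum.inr w))) := by
      funext x y q r
      show lamList (relabel (vanishPerm A B C) δ) (Finset.univ.toList)
          (x.map fun w => Sum.inr (Sum.inr w)) (y.map fun w => Sum.inr (Sum.inr w)) q r = _
      simp only [T1, Option.map_map]
      rfl
    rw [hinit2]
    exact Vanish.elimList_map (fun w => (vanishPerm A B C).symm (Sum.inr (Sum.inr w))) Sum.inr
      (fun z => rfl) (fun z => rfl)
      (Vanish.elimList (lamInit δ) (((Finset.univ : Finset A).toList).map Sum.inl)) L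
  funext a b
  apply propext
  simp only [kappa]
  simp only [T2, Option.map_map]
  have harg : ∀ o : Option C,
      Option.map ((fun w => (vanishPerm A B C).symm (Sum.inr (Sum.inr w)))
          ∘ (fun x : C => Sum.inr (Sum.inr x))) o
        = Option.map (fun x : C => (Sum.inr (Sum.inr x) : (A ⊕ B) ⊕ (A ⊕ B) ⊕ C)) o := by
    intro o; cases o <;> rfl
  rw [harg, harg, ← Vanish.elimList_append, Vanish.lamList_eq_elimList]
  refine Vanish.elimList_mem_congr (lamInit δ) ?_ _ _ _ _
  intro w
  rcases w with a | b <;> simp [Finset.mem_toList]
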